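/- Let A : S_n(ℝ) → ℝ^m be linear with adjoint A^*, and let r0, p be positive integers with r0 + p ≤ n. Let X0 ∈ S_n(ℝ) be positive semidefinite with column space equal to span(e_1,…,e_{r0}), and let V ∈ ℝ^{n×p} have column space equal to span(e_{r0+1},…,e_{r0+p}). Then, for any g1 ∈ ℝ^m, the following two properties are equivalent. (1) There exist C1, C2 ∈ S_n(ℝ) such that A^*(g1) + C1 = C2, C1·X0 = 0, C1 ⪰ 0, rank(C1) = n − r0, and C2·V = 0. (2) Writing A^*(g1) in blocks according to the decomposition of indices into {1,…,r0}, {r0+1,…,r0+p}, {r0+p+1,…,n}, the (1,2)-block of A^*(g1) is zero and the (2,2)-block G3 ∈ S_p(ℝ) of A^*(g1) is negative definite. -/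

import Mathlib

open Matrix

namespace DualCert14

/-- index splitting equivalence -/
def eqv (n r0 p : ℕ) (hrp : r0 + p ≤ n) :
    Fin n ≃ (Fin r0 ⊕ (Fin p ⊕ Fin (n - (r0 + p)))) where
  toFun i :=
    if h : (i : ℕ) < r0 then .inl ⟨i, h⟩
    else if h2 : (i : ℕ) < r0 + p then .inr (.inl ⟨(i : ℕ) - r0, by omega⟩)
    else .inr (.inr ⟨(i : ℕ) - (r0 + p), by have := i.isLt; omega⟩)
  invFun s :=
    match s with
    | .inl a => ⟨a, by have := a.isLt; omega⟩
    | .inr (.inl b) => ⟨r0 + b, (by have := b.isLt; omega : r0 + (b : ℕ) < n + 0)⟩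
    | .inr (.inr c) => ⟨r0 + p + c, by have := c.isLt; omega⟩
  left_inv i := by
    by_cases h : (i : ℕ) < r0
    · simp only [dif_pos h]
    · by_cases h2 : (i : ℕ) < r0 + p
      · simp only [dif_neg h, dif_pos h2]
        exact Fin.ext (by simp; omega)
      · simp only [dif_neg h, dif_neg h2]
        exact Fin.ext (by simp; omega)
  right_inv s := by
    rcases s with a | b | c
    · exact dif_pos a.isLt
    · have h1 : ¬ (r0 + (b : ℕ) < r0) := by omega
      have h2 : r0 + (b : ℕ) < r0 + p := by have := b.isLt; omega
      show dite _ _ _ = _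
      rw [dif_neg h1, dif_pos h2]
      simp only [Sum.inr.injEq, Sum.inl.injEq]
      exact Fin.ext (by simp)
    · have h1 : ¬ (r0 + p + (c : ℕ) < r0) := by omega
      have h2 : ¬ (r0 + p + (c : ℕ) < r0 + p) := by omega
      show dite _ _ _ = _
      rw [dif_neg h1, dif_neg h2]
      simp only [Sum.inr.injEq]
      exact Fin.ext (by simp)

variable {n r0 p : ℕ}

lemma eqv_symm_inl (hrp : r0 + p ≤ n) (a : Fin r0) :
    (eqv n r0 p hrp).symm (.inl a) = ⟨a, by have := a.isLt; omega⟩ := rfl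

lemma eqv_symm_inr_inl (hrp : r0 + p ≤ n) (b : Fin p) :
    (eqv n r0 p hrp).symm (.inr (.inl b)) = ⟨r0 + b, (by have := b.isLt; omega : r0 + (b : ℕ) < n + 0)⟩ := rfl

lemma eqv_symm_inr_inr (hrp : r0 + p ≤ n) (c : Fin (n - (r0 + p))) :
    (eqv n r0 p hrp).symm (.inr (.inr c)) = ⟨r0 + p + c, by have := c.isLt; omega⟩ := rfl

lemma eqv_lt (hrp : r0 + p ≤ n) (i : Fin n) (h : (i : ℕ) < r0) :
    eqv n r0 p hrp i = .inl ⟨i, h⟩ := dif_pos h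

lemma eqv_mid (hrp : r0 + p ≤ n) (i : Fin n) (h : r0 ≤ (i : ℕ)) (h2 : (i : ℕ) < r0 + p) :
    eqv n r0 p hrp i = .inr (.inl ⟨(i : ℕ) - r0, by omega⟩) := by
  unfold eqv
  simp only [Equiv.coe_fn_mk, dif_neg (by omega : ¬ (i : ℕ) < r0), dif_pos h2]

lemma eqv_hi (hrp : r0 + p ≤ n) (i : Fin n) (h : r0 + p ≤ (i : ℕ)) :
    eqv n r0 p hrp i = .inr (.inr ⟨(i : ℕ) - (r0 + p), by have := i.isLt; omega⟩) := by
  unfold eqv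
  simp only [Equiv.coe_fn_mk, dif_neg (by omega : ¬ (i : ℕ) < r0),
    dif_neg (by omega : ¬ (i : ℕ) < r0 + p)]


/-- The coordinate subspace of vectors supported on the first `r0` coordinates. -/
def P1 (n r0 : ℕ) : Submodule ℝ (Fin n → ℝ) where
  carrier := {x | ∀ i : Fin n, r0 ≤ (i : ℕ) → x i = 0}
  add_mem' := by intro a b ha hb i hi; simp [ha i hi, hb i hi]
  zero_mem' := fun i _ => rfl
  smul_mem' := by intro c x hx i hi; simp [hx i hi]

variable {n r0 p : ℕ}

lemma mem_P1 {x : Fin n → ℝ} : x ∈ P1 n r0 ↔ ∀ i : Fin n, r0 ≤ (i : ℕ) → x i = 0 := Iff.rfl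

lemma span_P1 :
    Submodule.span ℝ {x : Fin n → ℝ | ∀ i : Fin n, r0 ≤ (i : ℕ) → x i = 0} = P1 n r0 :=
  le_antisymm (Submodule.span_le.mpr fun _ hx => hx) fun _ hx => Submodule.subset_span hx

/-- The coordinate subspace of vectors supported on the middle block of coordinates. -/
def P2 (n r0 p : ℕ) : Submodule ℝ (Fin n → ℝ) where
  carrier := {x | ∀ i : Fin n, ((i : ℕ) < r0 ∨ r0 + p ≤ (i : ℕ)) → x i = 0}
  add_mem' := by intro a b ha hb i hi; simp [ha i hi, hb i hi]
  zero_mem' := fun i _ => rfl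
  smul_mem' := by intro c x hx i hi; simp [hx i hi]

lemma mem_P2 {x : Fin n → ℝ} :
    x ∈ P2 n r0 p ↔ ∀ i : Fin n, ((i : ℕ) < r0 ∨ r0 + p ≤ (i : ℕ)) → x i = 0 := Iff.rfl

lemma span_P2 :
    Submodule.span ℝ {x : Fin n → ℝ | ∀ i : Fin n, ((i : ℕ) < r0 ∨ r0 + p ≤ (i : ℕ)) → x i = 0}
      = P2 n r0 p :=
  le_antisymm (Submodule.span_le.mpr fun _ hx => hx) fun _ hx => Submodule.subset_span hx

/-- Extension by zero from the first `r0` coordinates. -/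
def ext0 (n r0 : ℕ) : (Fin r0 → ℝ) →ₗ[ℝ] (Fin n → ℝ) where
  toFun w := fun i => if h : (i : ℕ) < r0 then w ⟨i, h⟩ else 0
  map_add' := by intro u v; funext i; by_cases h : (i : ℕ) < r0 <;> simp [h]
  map_smul' := by intro c u; funext i; by_cases h : (i : ℕ) < r0 <;> simp [h]

lemma ext0_apply (w : Fin r0 → ℝ) (i : Fin n) :
    ext0 n r0 w i = if h : (i : ℕ) < r0 then w ⟨i, h⟩ else 0 := rfl

lemma range_ext0 (hr : r0 ≤ n) : LinearMap.range (ext0 n r0) = P1 n r0 := by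
  ext x
  rw [LinearMap.mem_range, mem_P1]
  constructor
  · rintro ⟨w, rfl⟩
    intro i hi
    rw [ext0_apply, dif_neg (by omega)]
  · intro hx
    refine ⟨fun a => x ⟨a, by have := a.isLt; omega⟩, funext fun i => ?_⟩
    rw [ext0_apply]
    by_cases h : (i : ℕ) < r0
    · rw [dif_pos h]
    · rw [dif_neg h]
      exact (hx i (by omega)).symm

lemma ext0_injective (hr : r0 ≤ n) : Function.Injective (ext0 n r0) := by
  intro u v h
  funext a
  have := congrFun h ⟨a, by have := a.isLt; omega⟩
  rw [ext0_apply, ext0_apply, dif_pos a.isLt] at this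
  simpa using this

lemma finrank_P1 (hr : r0 ≤ n) : Module.finrank ℝ (P1 n r0) = r0 := by
  rw [← range_ext0 hr, LinearMap.finrank_range_of_inj (ext0_injective hr),
    Module.finrank_fin_fun]

/-- The middle-index embedding. -/
def mid (n r0 p : ℕ) (hrp : r0 + p ≤ n) (b : Fin p) : Fin n :=
  ⟨r0 + b, (by have := b.isLt; omega : r0 + (b : ℕ) < n + 0)⟩

@[simp] lemma mid_val (hrp : r0 + p ≤ n) (b : Fin p) :
    ((mid n r0 p hrp b : Fin n) : ℕ) = r0 + b := rfl

lemma sum_split (hrp : r0 + p ≤ n) (F : Fin n → ℝ) :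
    ∑ i, F i = (∑ a : Fin r0, F ⟨a, by have := a.isLt; omega⟩) +
      ((∑ b : Fin p, F (mid n r0 p hrp b)) +
        ∑ c : Fin (n - (r0 + p)), F ⟨r0 + p + c, by have := c.isLt; omega⟩) := by
  rw [Fintype.sum_equiv (eqv n r0 p hrp) F (fun s => F ((eqv n r0 p hrp).symm s))
    (fun i => (congrArg F (Equiv.symm_apply_apply _ i)).symm),
    Fintype.sum_sum_type, Fintype.sum_sum_type]
  rfl

/-- Extension by zero into the middle block of coordinates. -/
def xw (n r0 p : ℕ) (w : Fin p → ℝ) : Fin n → ℝ := fun i =>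
  if h : r0 ≤ (i : ℕ) ∧ (i : ℕ) < r0 + p then w ⟨(i : ℕ) - r0, by omega⟩ else 0

lemma xw_mid (hrp : r0 + p ≤ n) (w : Fin p → ℝ) (b : Fin p) :
    xw n r0 p w (mid n r0 p hrp b) = w b := by
  unfold xw
  simp only [mid_val hrp]
  refine (dif_pos (show r0 ≤ r0 + (b : ℕ) ∧ r0 + (b : ℕ) < r0 + p from
    ⟨Nat.le_add_right _ _, by have := b.isLt; omega⟩)).trans ?_
  exact congrArg w (Fin.ext (by simp))

lemma xw_zero (w : Fin p → ℝ) (i : Fin n) (h : (i : ℕ) < r0 ∨ r0 + p ≤ (i : ℕ)) :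
    xw n r0 p w i = 0 := dif_neg (by omega)

lemma sum_mul_xw (hrp : r0 + p ≤ n) (w : Fin p → ℝ) (F : Fin n → ℝ) :
    ∑ i, F i * xw n r0 p w i = ∑ b, F (mid n r0 p hrp b) * w b := by
  rw [sum_split hrp (fun i => F i * xw n r0 p w i)]
  rw [Finset.sum_eq_zero (fun (a : Fin r0) _ => by
    have h0 : xw n r0 p w (⟨a, by have := a.isLt; omega⟩ : Fin n) = 0 :=
      xw_zero _ _ (Or.inl a.isLt)
    rw [h0, mul_zero])]
  rw [Finset.sum_eq_zero (fun (c : Fin (n - (r0 + p))) _ => by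
    have h0 : xw n r0 p w (⟨r0 + p + c, by have := c.isLt; omega⟩ : Fin n) = 0 :=
      xw_zero _ _ (Or.inr (Nat.le_add_right _ _))
    rw [h0, mul_zero])]
  simp only [xw_mid hrp]
  ring

lemma mulVec_xw (hrp : r0 + p ≤ n) (M : Matrix (Fin n) (Fin n) ℝ) (w : Fin p → ℝ)
    (i : Fin n) : (M *ᵥ xw n r0 p w) i = ∑ b, M i (mid n r0 p hrp b) * w b := by
  show ∑ j, M i j * xw n r0 p w j = _
  exact sum_mul_xw hrp w (fun j => M i j)

lemma dot_xw (hrp : r0 + p ≤ n) (M : Matrix (Fin n) (Fin n) ℝ) (w : Fin p → ℝ) :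
    xw n r0 p w ⬝ᵥ M *ᵥ xw n r0 p w =
      w ⬝ᵥ (M.submatrix (mid n r0 p hrp) (mid n r0 p hrp)) *ᵥ w := by
  show ∑ i, xw n r0 p w i * (M *ᵥ xw n r0 p w) i = ∑ b, w b * _
  have : ∀ i, xw n r0 p w i * (M *ᵥ xw n r0 p w) i
      = (M *ᵥ xw n r0 p w) i * xw n r0 p w i := fun i => mul_comm _ _
  rw [Finset.sum_congr rfl (fun i _ => this i), sum_mul_xw hrp w]
  refine Finset.sum_congr rfl (fun b _ => ?_)
  rw [mulVec_xw hrp, mul_comm]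
  rfl

end DualCert14
open DualCert14

/-- block characterization of the existence of a pair of dual
certificates `C1, C2` adapted to `X0` (with column space `span(e_1,…,e_{r0})`)
and `V` (with column space `span(e_{r0+1},…,e_{r0+p})`).  The adjoint `A^*`
of `A : S_n(ℝ) → ℝ^m` with respect to the trace inner product is carried as a
map `𝒜ad` with `∑ i, A(X)_i g_i = Tr(A^*(g) X)` for symmetric `X`. -/
theorem dual_certificate_block_characterization
    (n m r0 p : ℕ) (hr0 : 0 < r0) (hp : 0 < p) (hrp : r0 + p ≤ n)
    (𝒜 : Matrix (Fin n) (Fin n) ℝ →ₗ[ℝ] (Fin m → ℝ))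
    (𝒜ad : (Fin m → ℝ) →ₗ[ℝ] Matrix (Fin n) (Fin n) ℝ)
    (had_symm : ∀ g, (𝒜ad g).IsSymm)
    (hadj : ∀ (X : Matrix (Fin n) (Fin n) ℝ) (g : Fin m → ℝ), X.IsSymm →
      ∑ i, 𝒜 X i * g i = Matrix.trace (𝒜ad g * X))
    (X0 : Matrix (Fin n) (Fin n) ℝ) (hX0 : X0.PosSemidef)
    (hX0range : LinearMap.range X0.mulVecLin =
      Submodule.span ℝ {x : Fin n → ℝ | ∀ i : Fin n, r0 ≤ (i : ℕ) → x i = 0})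
    (V : Matrix (Fin n) (Fin p) ℝ)
    (hVrange : LinearMap.range V.mulVecLin =
      Submodule.span ℝ
        {x : Fin n → ℝ | ∀ i : Fin n, ((i : ℕ) < r0 ∨ r0 + p ≤ (i : ℕ)) → x i = 0}) :
    ∀ g1 : Fin m → ℝ,
      (∃ C1 C2 : Matrix (Fin n) (Fin n) ℝ, C1.IsSymm ∧ C2.IsSymm ∧
          𝒜ad g1 + C1 = C2 ∧ C1 * X0 = 0 ∧ C1.PosSemidef ∧
          C1.rank = n - r0 ∧ C2 * V = 0)
        ↔
      ((∀ i j : Fin n, (i : ℕ) < r0 → r0 ≤ (j : ℕ) → (j : ℕ) < r0 + p → 𝒜ad g1 i j = 0)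
        ∧ (-(Matrix.of fun a b : Fin p =>
            𝒜ad g1 ⟨r0 + a.val, by have := a.isLt; omega⟩
              ⟨r0 + b.val, by have := b.isLt; omega⟩)).PosDef) := by
  intro g1
  have hrn : r0 ≤ n := by omega
  set G := 𝒜ad g1 with hGdef
  have hGs : G.IsSymm := had_symm g1
  have hG3eq : (Matrix.of fun a b : Fin p =>
      G ⟨r0 + a.val, by have := a.isLt; omega⟩ ⟨r0 + b.val, by have := b.isLt; omega⟩)
      = G.submatrix (mid n r0 p hrp) (mid n r0 p hrp) := rfl
  constructor
  · -- forward direction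
    rintro ⟨C1, C2, hC1s, hC2s, hsum, hC1X0, hC1psd, hC1rank, hC2V⟩
    -- columns of C1 with index < r0 vanish
    have hC1col : ∀ j : Fin n, (j : ℕ) < r0 → ∀ i, C1 i j = 0 := by
      intro j hj i
      have hmem : (Pi.single j (1:ℝ)) ∈ LinearMap.range X0.mulVecLin := by
        rw [hX0range, span_P1]
        intro k hk
        exact Pi.single_eq_of_ne (fun hkj => by subst hkj; omega) 1
      obtain ⟨v, hv⟩ := hmem
      have hv' : X0 *ᵥ v = Pi.single j 1 := hv
      have h0 : C1 *ᵥ Pi.single j 1 = 0 := by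
        rw [← hv', mulVec_mulVec, hC1X0, zero_mulVec]
      have := congrFun h0 i
      rw [mulVec_single] at this
      simpa using this
    -- columns of C2 with index in the middle block vanish
    have hC2col : ∀ j : Fin n, r0 ≤ (j : ℕ) → (j : ℕ) < r0 + p → ∀ i, C2 i j = 0 := by
      intro j hj1 hj2 i
      have hmem : (Pi.single j (1:ℝ)) ∈ LinearMap.range V.mulVecLin := by
        rw [hVrange]
        refine Submodule.subset_span ?_
        intro k hk
        exact Pi.single_eq_of_ne (fun hkj => by subst hkj; rcases hk with h | h <;> omega) 1
      obtain ⟨v, hv⟩ := hmem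
      have hv' : V *ᵥ v = Pi.single j 1 := hv
      have h0 : C2 *ᵥ Pi.single j 1 = 0 := by
        rw [← hv', mulVec_mulVec, hC2V, zero_mulVec]
      have := congrFun h0 i
      rw [mulVec_single] at this
      simpa using this
    have hGmid : ∀ i j : Fin n, (i : ℕ) < r0 → r0 ≤ (j : ℕ) → (j : ℕ) < r0 + p →
        G i j = 0 := by
      intro i j hi hj1 hj2
      have h1 : G i j + C1 i j = C2 i j := by rw [← hsum]; rfl
      have h2 : C1 i j = 0 := by rw [← hC1s.apply i j]; exact hC1col i hi j
      have h3 : C2 i j = 0 := hC2col j hj1 hj2 i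
      rw [h2, h3] at h1
      simpa using h1
    -- kernel of C1 is exactly P1
    have hle : P1 n r0 ≤ LinearMap.ker C1.mulVecLin := by
      intro x hx
      rw [LinearMap.mem_ker]
      funext i
      show ∑ j, C1 i j * x j = 0
      refine Finset.sum_eq_zero fun j _ => ?_
      by_cases hj : (j : ℕ) < r0
      · rw [hC1col j hj i, zero_mul]
      · rw [hx j (by omega), mul_zero]
    have hrank' : Module.finrank ℝ (LinearMap.range C1.mulVecLin) = n - r0 := hC1rank
    have hrn2 := LinearMap.finrank_range_add_finrank_ker C1.mulVecLin
    rw [Module.finrank_fin_fun, hrank'] at hrn2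
    have hkerfr : Module.finrank ℝ (LinearMap.ker C1.mulVecLin) = r0 := by omega
    have hker : LinearMap.ker C1.mulVecLin = P1 n r0 :=
      (Submodule.eq_of_le_of_finrank_le hle (by rw [finrank_P1 hrn, hkerfr])).symm
    refine ⟨hGmid, ?_⟩
    rw [hG3eq, posDef_iff_dotProduct_mulVec]
    constructor
    · show (-(G.submatrix _ _))ᴴ = _
      rw [conjTranspose_eq_transpose_of_trivial, transpose_neg, transpose_submatrix,
        hGs.eq]
    · intro w hw
      set x := xw n r0 p w with hxdef
      have hxmem : x ∈ LinearMap.range V.mulVecLin := by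
        rw [hVrange]
        exact Submodule.subset_span (fun i hi => xw_zero w i hi)
      obtain ⟨v, hv⟩ := hxmem
      have hv' : V *ᵥ v = x := hv
      have hC2x : C2 *ᵥ x = 0 := by rw [← hv', mulVec_mulVec, hC2V, zero_mulVec]
      have hC1eq : C1 = C2 - G := by rw [← hsum, add_sub_cancel_left]
      have hquad : x ⬝ᵥ C1 *ᵥ x = w ⬝ᵥ (-(G.submatrix (mid n r0 p hrp) (mid n r0 p hrp))) *ᵥ w := by
        rw [hC1eq, sub_mulVec, hC2x, zero_sub, dotProduct_neg, hxdef, dot_xw hrp,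
          neg_mulVec, dotProduct_neg]
      have hge : 0 ≤ x ⬝ᵥ C1 *ᵥ x := by
        have := hC1psd.dotProduct_mulVec_nonneg x
        rwa [star_trivial] at this
      have hne : x ⬝ᵥ C1 *ᵥ x ≠ 0 := by
        intro h0
        have : C1 *ᵥ x = 0 := by
          rw [← (hC1psd.dotProduct_mulVec_zero_iff x)]
          rwa [star_trivial]
        have hxker : x ∈ LinearMap.ker C1.mulVecLin := this
        rw [hker] at hxker
        apply hw
        funext b
        have := hxker (mid n r0 p hrp b) (by simp [mid_val hrp])
        rwa [hxdef, xw_mid hrp] at this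
      rw [star_trivial, ← hquad]
      exact lt_of_le_of_ne hge (Ne.symm hne)
  · rintro ⟨hG0, hG3pd⟩
    rw [hG3eq] at hG3pd
    -- column support of X0 and V
    have hX0col : ∀ (k j : Fin n), r0 ≤ (k : ℕ) → X0 k j = 0 := by
      intro k j hk
      have hmem : X0 *ᵥ Pi.single j 1 ∈ LinearMap.range X0.mulVecLin := ⟨Pi.single j 1, rfl⟩
      rw [hX0range, span_P1, mem_P1] at hmem
      have := hmem k hk
      rw [mulVec_single] at this
      simpa using this
    have hVcol : ∀ (k : Fin n) (j : Fin p), ((k : ℕ) < r0 ∨ r0 + p ≤ (k : ℕ)) → V k j = 0 := by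
      intro k j hk
      have hmem : V *ᵥ Pi.single j 1 ∈ LinearMap.range V.mulVecLin := ⟨Pi.single j 1, rfl⟩
      rw [hVrange, span_P2, mem_P2] at hmem
      have := hmem k hk
      rw [mulVec_single] at this
      simpa using this
    -- block data
    set A := -(G.submatrix (mid n r0 p hrp) (mid n r0 p hrp)) with hAdef
    set B := -(G.submatrix (mid n r0 p hrp)
      (fun c : Fin (n - (r0 + p)) => (⟨r0 + p + c, by have := c.isLt; omega⟩ : Fin n)))
      with hBdef
    set D := Bᵀ * A⁻¹ * B + 1 with hDdef
    set M := fromBlocks A B Bᵀ D with hMdef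
    set N := fromBlocks (0 : Matrix (Fin r0) (Fin r0) ℝ) 0 0 M with hNdef
    set C1 := N.submatrix (eqv n r0 p hrp) (eqv n r0 p hrp) with hC1def
    have hA : A.PosDef := hG3pd
    haveI hAinv : Invertible A := hA.isUnit.invertible
    have hAs : Aᵀ = A := by rw [hAdef]; rw [transpose_neg, transpose_submatrix, hGs.eq]
    have hDs : Dᵀ = D := by
      rw [hDdef, transpose_add, transpose_one, transpose_mul, transpose_mul,
        transpose_transpose, transpose_nonsing_inv, hAs, Matrix.mul_assoc]
    have hMs : Mᵀ = M := by
      rw [hMdef, fromBlocks_transpose, hAs, hDs, transpose_transpose]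
    have hNs : Nᵀ = N := by
      rw [hNdef, fromBlocks_transpose, hMs, transpose_zero, transpose_zero, transpose_zero]
    have hC1s : C1.IsSymm := by
      rw [Matrix.IsSymm, hC1def, transpose_submatrix, hNs]
    have hBH : Bᴴ = Bᵀ := conjTranspose_eq_transpose_of_trivial B
    have hSchur : D - Bᵀ * A⁻¹ * B = 1 := by rw [hDdef]; abel
    have hMps : M.PosSemidef := by
      rw [hMdef, ← hBH, PosDef.fromBlocks₁₁ B D hA, hBH, hSchur]
      exact Matrix.PosDef.one.posSemidef
    have hMunit : IsUnit M := by
      rw [Matrix.isUnit_iff_isUnit_det, hMdef, det_fromBlocks₁₁,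
        invOf_eq_nonsing_inv, hSchur, det_one, mul_one]
      exact hA.det_pos.ne'.isUnit
    have hNps : N.PosSemidef := by
      rw [posSemidef_iff_dotProduct_mulVec]
      constructor
      · show Nᴴ = N
        rw [conjTranspose_eq_transpose_of_trivial, hNs]
      · intro y
        rw [star_trivial, ← Sum.elim_comp_inl_inr y, hNdef, fromBlocks_mulVec]
        simp only [zero_mulVec, add_zero, zero_add, sumElim_dotProduct_sumElim,
          dotProduct_zero, Sum.elim_comp_inl, Sum.elim_comp_inr]
        have := hMps.dotProduct_mulVec_nonneg (y ∘ Sum.inr)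
        rw [star_trivial] at this
        exact this
    have hC1ps : C1.PosSemidef := by
      rw [hC1def]
      exact (posSemidef_submatrix_equiv (eqv n r0 p hrp)).mpr hNps
    have hC1app : ∀ i j : Fin n, C1 i j = N (eqv n r0 p hrp i) (eqv n r0 p hrp j) :=
      fun i j => rfl
    have hC1colz : ∀ i j : Fin n, (j : ℕ) < r0 → C1 i j = 0 := by
      intro i j hj
      rw [hC1app, eqv_lt hrp j hj]
      rcases h : eqv n r0 p hrp i with a | s
      · rw [hNdef, fromBlocks_apply₁₁, Matrix.zero_apply]
      · rw [hNdef, fromBlocks_apply₂₁, Matrix.zero_apply]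
    have hC1X0 : C1 * X0 = 0 := by
      ext i j
      rw [Matrix.mul_apply, Matrix.zero_apply]
      refine Finset.sum_eq_zero fun k _ => ?_
      by_cases hk : (k : ℕ) < r0
      · rw [hC1colz i k hk, zero_mul]
      · rw [hX0col k j (by omega), mul_zero]
    -- middle columns of C2 vanish
    have hC2mid : ∀ i k : Fin n, r0 ≤ (k : ℕ) → (k : ℕ) < r0 + p → G i k + C1 i k = 0 := by
      intro i k hk1 hk2
      have hmidk : mid n r0 p hrp ⟨(k : ℕ) - r0, by omega⟩ = k :=
        Fin.ext (by simp [mid_val]; omega)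
      rw [hC1app, eqv_mid hrp k hk1 hk2]
      rcases Nat.lt_or_ge (i : ℕ) r0 with hi | hi
      · rw [eqv_lt hrp i hi, hNdef, fromBlocks_apply₁₂, Matrix.zero_apply, hG0 i k hi hk1 hk2,
          add_zero]
      · rcases Nat.lt_or_ge (i : ℕ) (r0 + p) with hi2 | hi2
        · have hmidi : mid n r0 p hrp ⟨(i : ℕ) - r0, by omega⟩ = i :=
            Fin.ext (by simp [mid_val]; omega)
          rw [eqv_mid hrp i hi hi2, hNdef, fromBlocks_apply₂₂, hMdef, fromBlocks_apply₁₁,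
            hAdef, Matrix.neg_apply, Matrix.submatrix_apply, hmidi, hmidk]
          ring
        · have hi3 : (⟨r0 + p + ((i : ℕ) - (r0 + p)), by have := i.isLt; omega⟩ : Fin n) = i :=
            Fin.ext (by simp; omega)
          rw [eqv_hi hrp i hi2, hNdef, fromBlocks_apply₂₂, hMdef, fromBlocks_apply₂₁,
            Matrix.transpose_apply, hBdef, Matrix.neg_apply, Matrix.submatrix_apply,
            hmidk, hi3, hGs.apply i k]
          ring
    have hC2V : (G + C1) * V = 0 := by
      ext i j
      rw [Matrix.mul_apply, Matrix.zero_apply]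
      refine Finset.sum_eq_zero fun k _ => ?_
      by_cases hk : r0 ≤ (k : ℕ) ∧ (k : ℕ) < r0 + p
      · rw [Matrix.add_apply, hC2mid i k hk.1 hk.2, zero_mul]
      · rw [hVcol k j (by omega), mul_zero]
    have hC2s : (G + C1).IsSymm := by
      rw [Matrix.IsSymm, transpose_add, hGs.eq, hC1s.eq]
    -- kernel of C1
    have hmulVecC1 : ∀ x : Fin n → ℝ, C1 *ᵥ x =
        (N *ᵥ (x ∘ (eqv n r0 p hrp).symm)) ∘ (eqv n r0 p hrp) :=
      fun x => submatrix_mulVec_equiv N x _ _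
    have hker : LinearMap.ker C1.mulVecLin = P1 n r0 := by
      ext x
      rw [LinearMap.mem_ker, mem_P1]
      constructor
      · intro h
        have h' : C1 *ᵥ x = 0 := h
        rw [hmulVecC1] at h'
        have hy : M *ᵥ (fun s => x ((eqv n r0 p hrp).symm (Sum.inr s))) = 0 := by
          funext s
          have h2 := congrFun h' ((eqv n r0 p hrp).symm (Sum.inr s))
          rw [Function.comp_apply, Equiv.apply_symm_apply] at h2
          set z := x ∘ (eqv n r0 p hrp).symm with hz
          rw [← Sum.elim_comp_inl_inr z, hNdef, fromBlocks_mulVec] at h2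
          simp at h2; exact h2
        have hy2 : (fun s => x ((eqv n r0 p hrp).symm (Sum.inr s))) = 0 :=
          (mulVec_injective_iff_isUnit.mpr hMunit) (by rw [hy, mulVec_zero])
        intro i hi
        rcases Nat.lt_or_ge (i : ℕ) (r0 + p) with h2 | h2
        · have h3 := congrFun hy2 (Sum.inl ⟨(i : ℕ) - r0, by omega⟩)
          rw [eqv_symm_inr_inl] at h3
          have h4 : (⟨r0 + ((i : ℕ) - r0), by have := i.isLt; omega⟩ : Fin n) = i :=
            Fin.ext (by simp; omega)
          rwa [h4] at h3
        · have h3 := congrFun hy2 (Sum.inr ⟨(i : ℕ) - (r0 + p), by have := i.isLt; omega⟩)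
          rw [eqv_symm_inr_inr] at h3
          have h4 : (⟨r0 + p + ((i : ℕ) - (r0 + p)), by have := i.isLt; omega⟩ : Fin n) = i :=
            Fin.ext (by simp; omega)
          rwa [h4] at h3
      · intro h
        show C1 *ᵥ x = 0
        funext i
        show ∑ j, C1 i j * x j = 0
        refine Finset.sum_eq_zero fun j _ => ?_
        by_cases hj : (j : ℕ) < r0
        · rw [hC1colz i j hj, zero_mul]
        · rw [h j (by omega), mul_zero]
    have hr1 := LinearMap.finrank_range_add_finrank_ker C1.mulVecLin
    rw [Module.finrank_fin_fun, hker, finrank_P1 hrn] at hr1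
    have hrank : C1.rank = n - r0 := by
      show Module.finrank ℝ (LinearMap.range C1.mulVecLin) = n - r0
      omega
    exact ⟨C1, G + C1, hC1s, hC2s, rfl, hC1X0, hC1ps, hrank, hC2V⟩
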